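/- The polynomials A_n(q) = Σ_{P ∈ M_n} q^{2·sh_u(P) + sh_h(P)} satisfy the recursion A_0(q) = 1 and A_n(q) = A_{n-1}(q) + Σ_{k=0}^{n-2} q^k A_k(q) A_{n-2-k}(q) for n ≥ 1; i.e., A_n(q) = M_n(q), the q-Motzkin polynomial. -/

import Mathlib

/-- Steps of a Motzkin path: up, horizontal, down. -/
inductive MStep : Type
  | U | H | D
deriving DecidableEq

instance : Fintype MStep where
  elems := {MStep.U, MStep.H, MStep.D}
  complete := by intro x; cases x <;> simp

/-- The height of the `i`-th step of `P` (the `y`-coordinate of its starting point),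
i.e. the number of up steps minus the number of down steps among the first `i` steps. -/
def stepHeight (P : List MStep) (i : ℕ) : ℕ :=
  (P.take i).count MStep.U - (P.take i).count MStep.D

/-- `P` is a Motzkin path: every prefix has at least as many up steps as down steps,
and the whole word has equally many up and down steps. -/
def IsMotzkin (P : List MStep) : Prop :=
  (∀ i ≤ P.length, (P.take i).count MStep.D ≤ (P.take i).count MStep.U) ∧
    P.count MStep.D = P.count MStep.U

def upCount (P : List MStep) : ℕ := P.count MStep.U
def horCount (P : List MStep) : ℕ := P.count MStep.H
def downCount (P : List MStep) : ℕ := P.count MStep.D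

/-- Sum of the heights of all steps of `P` equal to `s`. -/
def shSum (s : MStep) (P : List MStep) : ℕ :=
  ∑ i ∈ Finset.range P.length, if P.getD i MStep.H = s then stepHeight P i else 0

/-- The area between a Motzkin path and the x-axis (sum over steps of the
average of the heights of the two endpoints of the step). -/
def area (P : List MStep) : ℕ :=
  (∑ i ∈ Finset.range P.length, (stepHeight P i + stepHeight P (i + 1))) / 2

open Classical in
/-- The finite set of Motzkin paths of length `n`. -/
noncomputable def motzkinSet (n : ℕ) : Finset (List MStep) :=
  ((Finset.univ : Finset (Fin n → MStep)).image fun f => List.ofFn f).filter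
    fun P => IsMotzkin P

open Polynomial

/-- `A n q = ∑_{P ∈ M_n} q^{2·sh_u P + sh_h P}`. -/
noncomputable def Apoly (n : ℕ) : Polynomial ℤ :=
  ∑ P ∈ motzkinSet n, (X : Polynomial ℤ) ^ (2 * shSum MStep.U P + shSum MStep.H P)

-- AUX
lemma mlen_eq (P : List MStep) :
    P.length = P.count MStep.U + P.count MStep.H + P.count MStep.D := by
  induction P with
  | nil => simp
  | cons a t ih => cases a <;> simp [List.count_cons, ih] <;> omega

lemma mprefix_le {P : List MStep} (h : IsMotzkin P) (i : ℕ) :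
    (P.take i).count MStep.D ≤ (P.take i).count MStep.U := by
  rcases le_or_gt i P.length with hi | hi
  · exact h.1 i hi
  · rw [List.take_of_length_le hi.le]; exact h.2.le

lemma isMotzkin_nil : IsMotzkin ([] : List MStep) := by constructor <;> simp

lemma isMotzkin_cons_H {P : List MStep} : IsMotzkin (MStep.H :: P) ↔ IsMotzkin P := by
  constructor
  · rintro ⟨h1, h2⟩
    refine ⟨fun i hi => ?_, by simpa [List.count_cons] using h2⟩
    have := h1 (i+1) (by simpa using Nat.succ_le_succ hi)
    simpa [List.count_cons] using this
  · rintro ⟨h1, h2⟩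
    refine ⟨fun i hi => ?_, by simpa [List.count_cons] using h2⟩
    cases i with
    | zero => simp
    | succ j =>
      have := h1 j (by simpa using hi)
      simpa [List.count_cons] using this

def glue (P1 P2 : List MStep) : List MStep := MStep.U :: (P1 ++ MStep.D :: P2)

lemma glue_length (P1 P2 : List MStep) :
    (glue P1 P2).length = P1.length + 2 + P2.length := by
  simp [glue]; omega

lemma isMotzkin_glue {P1 P2 : List MStep} (h1 : IsMotzkin P1) (h2 : IsMotzkin P2) :
    IsMotzkin (glue P1 P2) := by
  constructor
  · intro i _
    cases i with
    | zero => simp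
    | succ j =>
      rw [glue, List.take_succ_cons]
      rcases le_or_gt j P1.length with hj | hj
      · rw [List.take_append_of_le_length hj]
        have := mprefix_le h1 j
        simp [List.count_cons]
        omega
      · obtain ⟨i2, rfl⟩ : ∃ i2, j = P1.length + (1 + i2) := ⟨j - P1.length - 1, by omega⟩
        rw [List.take_length_add_append, Nat.add_comm 1 i2, List.take_succ_cons]
        have hb := mprefix_le h2 i2
        have h1b := h1.2
        simp [List.count_cons, List.count_append]
        omega
  · have hb1 := h1.2
    have hb2 := h2.2
    simp [glue, List.count_append, List.count_cons]
    omega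

lemma mdecomp {P : List MStep} (h : IsMotzkin P) (hne : P ≠ []) :
    (∃ Q, P = MStep.H :: Q ∧ IsMotzkin Q) ∨
    ∃ P1 P2, P = glue P1 P2 ∧ IsMotzkin P1 ∧ IsMotzkin P2 := by
  cases P with
  | nil => exact absurd rfl hne
  | cons a Q =>
    cases a with
    | H => exact Or.inl ⟨Q, rfl, isMotzkin_cons_H.mp h⟩
    | D =>
      exfalso
      have := h.1 1 (by simp)
      simp [List.count_cons] at this
    | U =>
      right
      have htot : Q.count MStep.D = Q.count MStep.U + 1 := by
        have := h.2; simp [List.count_cons] at this; omega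
      have hex : ∃ j, (Q.take j).count MStep.D = (Q.take j).count MStep.U + 1 :=
        ⟨Q.length, by simpa using htot⟩
      classical
      obtain ⟨j, hj, hmin⟩ :
          ∃ j, ((Q.take j).count MStep.D = (Q.take j).count MStep.U + 1) ∧
            ∀ i < j, ¬((Q.take i).count MStep.D = (Q.take i).count MStep.U + 1) :=
        ⟨Nat.find hex, Nat.find_spec hex, fun i hi => Nat.find_min hex hi⟩
      have hjle : j ≤ Q.length := by
        by_contra hlt
        push_neg at hlt
        exact hmin Q.length hlt (by simpa using htot)
      have hj0 : j ≠ 0 := by intro h0; subst h0; simp at hj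
      obtain ⟨j', rfl⟩ := Nat.exists_eq_succ_of_ne_zero hj0
      have hpre : ∀ i ≤ j', (Q.take i).count MStep.D ≤ (Q.take i).count MStep.U := by
        intro i hi
        have hh := h.1 (i+1) (by simp; omega)
        rw [List.take_succ_cons] at hh
        simp [List.count_cons] at hh
        have h2 := hmin i (by omega)
        omega
      have hjlt : j' < Q.length := by omega
      have hts : Q.take (j'+1) = Q.take j' ++ [Q[j']] := by
        rw [List.take_succ, List.getElem?_eq_getElem hjlt]; rfl
      rw [hts] at hj
      have hpj := hpre j' le_rfl
      have hgd1 : Q[j'] = MStep.D := by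
        cases hx : Q[j'] with
        | D => rfl
        | U =>
          exfalso; rw [hx] at hj
          simp [List.count_append, List.count_cons] at hj
          omega
        | H =>
          exfalso; rw [hx] at hj
          simp [List.count_append, List.count_cons] at hj
          omega
      have hgd2 : (Q.take j').count MStep.D = (Q.take j').count MStep.U := by
        rw [hgd1] at hj
        simp [List.count_append, List.count_cons] at hj
        omega
      have hgd : Q[j'] = MStep.D ∧
          (Q.take j').count MStep.D = (Q.take j').count MStep.U := ⟨hgd1, hgd2⟩
      have hQeq : Q = Q.take j' ++ MStep.D :: Q.drop (j'+1) := by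
        conv_lhs => rw [← List.take_append_drop (j'+1) Q]
        rw [hts, hgd.1, List.append_assoc]
        rfl
      refine ⟨Q.take j', Q.drop (j'+1), by rw [glue, ← hQeq], ⟨?_, hgd.2⟩, ⟨?_, ?_⟩⟩
      · intro i hi
        rw [List.take_take]
        have hi' : i ≤ j' := by simp [List.length_take] at hi; omega
        rw [min_eq_left hi']
        exact hpre i hi'
      · -- prefix condition for P2
        intro i hi
        have hlend : (Q.drop (j'+1)).length = Q.length - (j'+1) := by simp
        have hh := h.1 (j'+2+i) (by simp; omega)
        have e1 : j'+2+i = (j'+1+i)+1 := by omega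
        rw [e1, List.take_succ_cons] at hh
        have e2 : j'+1+i = (Q.take j').length + (1+i) := by
          simp [List.length_take]; omega
        rw [show Q.take (j'+1+i) = (Q.take j' ++ MStep.D :: Q.drop (j'+1)).take (j'+1+i) by rw [← hQeq],
          e2, List.take_length_add_append, Nat.add_comm 1 i, List.take_succ_cons] at hh
        have hbal := hgd.2
        simp [List.count_cons, List.count_append] at hh ⊢
        omega
      · -- balance for P2
        have hc : ∀ s : MStep, Q.count s =
            (Q.take j').count s + (MStep.D :: Q.drop (j'+1)).count s := by
          intro s; conv_lhs => rw [hQeq]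
          rw [List.count_append]
        have hcD := hc MStep.D
        have hcU := hc MStep.U
        have hbal := hgd.2
        simp [List.count_cons] at hcD hcU
        omega

lemma glue_not_lt {A B A' B' : List MStep} (hA : A.count MStep.D = A.count MStep.U)
    (hA' : IsMotzkin A') (he : A ++ MStep.D :: B = A' ++ MStep.D :: B') :
    ¬ A.length < A'.length := by
  intro hlt
  have h1 : (A ++ MStep.D :: B).take (A.length + 1) = A ++ [MStep.D] := by
    rw [show A.length + 1 = A.length + 1 from rfl, List.take_length_add_append, List.take_succ_cons,
      List.take_zero]
  have h2 : (A' ++ MStep.D :: B').take (A.length + 1) = A'.take (A.length + 1) := by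
    rw [List.take_append_of_le_length (by omega)]
  have h3 : A'.take (A.length + 1) = A ++ [MStep.D] := by rw [← h2, ← he, h1]
  have h4 := mprefix_le hA' (A.length + 1)
  rw [h3] at h4
  simp [List.count_append, List.count_cons] at h4
  omega

lemma glue_inj {P1 P2 P1' P2' : List MStep} (h1 : IsMotzkin P1) (h1' : IsMotzkin P1')
    (he : glue P1 P2 = glue P1' P2') : P1 = P1' ∧ P2 = P2' := by
  have he' : P1 ++ MStep.D :: P2 = P1' ++ MStep.D :: P2' := by
    simpa [glue] using he
  have hlen : P1.length = P1'.length := by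
    have ha := glue_not_lt h1.2 h1' he'
    have hb := glue_not_lt h1'.2 h1 he'.symm
    omega
  obtain ⟨e1, e2⟩ := List.append_inj he' hlen
  exact ⟨e1, by simpa using e2⟩

lemma count_eq_sum (P : List MStep) (s : MStep) :
    P.count s = ∑ i ∈ Finset.range P.length, (if P.getD i MStep.H = s then 1 else 0) := by
  induction P with
  | nil => simp
  | cons a t ih =>
    rw [List.length_cons, Finset.sum_range_succ']
    simp only [List.getD_cons_succ, List.getD_cons_zero, ← ih, List.count_cons, beq_iff_eq]

lemma stepHeight_zero (P : List MStep) : stepHeight P 0 = 0 := by simp [stepHeight]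

lemma stepHeight_cons_H (P : List MStep) (i : ℕ) :
    stepHeight (MStep.H :: P) (i+1) = stepHeight P i := by
  simp [stepHeight, List.take_succ_cons, List.count_cons]

lemma shSum_cons_H (s : MStep) (P : List MStep) :
    shSum s (MStep.H :: P) = shSum s P := by
  rw [shSum, List.length_cons, Finset.sum_range_succ']
  have h0 : (if (MStep.H :: P).getD 0 MStep.H = s then stepHeight (MStep.H::P) 0 else 0) = 0 := by
    rw [stepHeight_zero]; simp
  rw [h0, add_zero, shSum]
  exact Finset.sum_congr rfl fun i _ => by rw [List.getD_cons_succ, stepHeight_cons_H]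

lemma stepHeight_glue_left {P1 : List MStep} (P2 : List MStep) (h1 : IsMotzkin P1)
    (i : ℕ) (hi : i ≤ P1.length) :
    stepHeight (glue P1 P2) (i+1) = stepHeight P1 i + 1 := by
  rw [stepHeight, glue, List.take_succ_cons, List.take_append_of_le_length hi]
  have := mprefix_le h1 i
  simp [List.count_cons, stepHeight]
  omega

lemma stepHeight_glue_right {P1 : List MStep} (P2 : List MStep) (h1 : IsMotzkin P1) (i : ℕ) :
    stepHeight (glue P1 P2) (P1.length + 2 + i) = stepHeight P2 i := by
  rw [stepHeight, glue]
  have e1 : P1.length + 2 + i = (P1.length + 1 + i) + 1 := by omega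
  rw [e1, List.take_succ_cons]
  have e2 : P1.length + 1 + i = P1.length + (1 + i) := by omega
  rw [e2, List.take_length_add_append, Nat.add_comm 1 i, List.take_succ_cons]
  have hb := h1.2
  simp [List.count_cons, List.count_append, stepHeight]
  omega

lemma shSum_glue {P1 : List MStep} (P2 : List MStep) (s : MStep) (hs : s ≠ MStep.D)
    (h1 : IsMotzkin P1) :
    shSum s (glue P1 P2) = shSum s P1 + P1.count s + shSum s P2 := by
  set k := P1.length with hk
  have hlen : (glue P1 P2).length = (k+2) + P2.length := by rw [glue_length]
  rw [shSum, hlen, Finset.sum_range_add,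
    show k+2 = (k+1)+1 from rfl, Finset.sum_range_succ, Finset.sum_range_succ']
  have h0 : (if (glue P1 P2).getD 0 MStep.H = s then stepHeight (glue P1 P2) 0 else 0) = 0 := by
    rw [stepHeight_zero]; simp
  have hmid : (if (glue P1 P2).getD (k+1) MStep.H = s then stepHeight (glue P1 P2) (k+1) else 0)
      = 0 := by
    have : (glue P1 P2).getD (k+1) MStep.H = MStep.D := by
      rw [glue, List.getD_cons_succ, List.getD_append_right _ _ _ _ (by omega)]
      simp [hk]
    rw [this, if_neg (fun h => hs h.symm)]
  rw [h0, add_zero, hmid, add_zero]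
  have hA : ∑ i ∈ Finset.range k,
      (if (glue P1 P2).getD (i+1) MStep.H = s then stepHeight (glue P1 P2) (i+1) else 0)
      = shSum s P1 + P1.count s := by
    rw [shSum, count_eq_sum, ← Finset.sum_add_distrib]
    apply Finset.sum_congr rfl
    intro i hi
    rw [Finset.mem_range] at hi
    rw [glue, List.getD_cons_succ, List.getD_append _ _ _ _ (by omega)]
    rw [show (MStep.U :: (P1 ++ MStep.D :: P2)) = glue P1 P2 from rfl,
      stepHeight_glue_left P2 h1 i (by omega)]
    split <;> simp
  have hB : ∑ i ∈ Finset.range P2.length,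
      (if (glue P1 P2).getD ((k+2)+i) MStep.H = s then stepHeight (glue P1 P2) ((k+2)+i) else 0)
      = shSum s P2 := by
    rw [shSum]
    apply Finset.sum_congr rfl
    intro i hi
    rw [Finset.mem_range] at hi
    have hg : (glue P1 P2).getD ((k+2)+i) MStep.H = P2.getD i MStep.H := by
      rw [glue, show (k+2)+i = (k+1+i)+1 from by omega, List.getD_cons_succ,
        List.getD_append_right _ _ _ _ (by omega)]
      rw [show k+1+i - P1.length = i + 1 from by omega, List.getD_cons_succ]
    rw [hg, show (k+2)+i = P1.length + 2 + i from by omega, stepHeight_glue_right P2 h1 i]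
  rw [hA, hB]

def wexp (P : List MStep) : ℕ := 2 * shSum MStep.U P + shSum MStep.H P

lemma wexp_cons_H (P : List MStep) : wexp (MStep.H :: P) = wexp P := by
  simp [wexp, shSum_cons_H]

lemma wexp_glue {P1 : List MStep} (P2 : List MStep) (h1 : IsMotzkin P1) :
    wexp (glue P1 P2) = P1.length + (wexp P1 + wexp P2) := by
  have hU := shSum_glue P2 MStep.U (by simp) h1
  have hH := shSum_glue P2 MStep.H (by simp) h1
  have hlen := mlen_eq P1
  have hb := h1.2
  simp only [wexp, hU, hH]
  omega


lemma Apoly_eq (n : ℕ) : Apoly n = ∑ P ∈ motzkinSet n, (X : Polynomial ℤ) ^ wexp P := rfl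

lemma mem_motzkinSet {n : ℕ} {P : List MStep} :
    P ∈ motzkinSet n ↔ P.length = n ∧ IsMotzkin P := by
  classical
  simp only [motzkinSet, Finset.mem_filter, Finset.mem_image, Finset.mem_univ, true_and]
  constructor
  · rintro ⟨⟨f, rfl⟩, hm⟩
    exact ⟨by simp, hm⟩
  · rintro ⟨rfl, hm⟩
    exact ⟨⟨P.get, List.ofFn_get P⟩, hm⟩

lemma Apoly_zero : Apoly 0 = 1 := by
  have h : motzkinSet 0 = {([] : List MStep)} := by
    ext P
    simp only [mem_motzkinSet, List.length_eq_zero_iff, Finset.mem_singleton]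
    constructor
    · exact fun h => h.1
    · rintro rfl; exact ⟨rfl, isMotzkin_nil⟩
  rw [Apoly, h]
  simp [shSum]

lemma Apoly_rec (m : ℕ) :
    Apoly (m+1) = Apoly m +
      ∑ k ∈ Finset.range m, X ^ k * Apoly k * Apoly (m - 1 - k) := by
  classical
  have hset : motzkinSet (m+1) =
      ((motzkinSet m).image (fun P => MStep.H :: P)) ∪
      (Finset.range m).biUnion (fun k =>
        ((motzkinSet k) ×ˢ (motzkinSet (m-1-k))).image (fun p => glue p.1 p.2)) := by
    ext P
    simp only [Finset.mem_union, Finset.mem_image, Finset.mem_biUnion, Finset.mem_range,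
      Finset.mem_product, mem_motzkinSet]
    constructor
    · rintro ⟨hlen, hm⟩
      rcases mdecomp hm (by intro h0; rw [h0] at hlen; simp at hlen) with
        ⟨Q, rfl, hQ⟩ | ⟨P1, P2, rfl, h1, h2⟩
      · exact Or.inl ⟨Q, ⟨by simpa using hlen, hQ⟩, rfl⟩
      · right
        have hl : P1.length + 2 + P2.length = m + 1 := by rw [← glue_length]; exact hlen
        exact ⟨P1.length, by omega, ⟨P1, P2⟩,
          ⟨⟨rfl, h1⟩, ⟨show P2.length = m - 1 - P1.length by omega, h2⟩⟩, rfl⟩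
    · rintro (⟨Q, ⟨hlen, hQ⟩, rfl⟩ | ⟨k, hk, ⟨P1, P2⟩, ⟨⟨hl1, h1⟩, ⟨hl2, h2⟩⟩, rfl⟩)
      · exact ⟨by simp [hlen], isMotzkin_cons_H.mpr hQ⟩
      · exact ⟨by rw [glue_length]; omega, isMotzkin_glue h1 h2⟩
  have hdisj : Disjoint ((motzkinSet m).image (fun P => MStep.H :: P))
      ((Finset.range m).biUnion (fun k =>
        ((motzkinSet k) ×ˢ (motzkinSet (m-1-k))).image (fun p => glue p.1 p.2))) := by
    rw [Finset.disjoint_left]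
    rintro P hP hP'
    simp only [Finset.mem_image, Finset.mem_biUnion] at hP hP'
    obtain ⟨Q, _, rfl⟩ := hP
    obtain ⟨k, _, p, _, he⟩ := hP'
    rw [glue] at he
    exact MStep.noConfusion (List.head_eq_of_cons_eq he)
  have hpair : (↑(Finset.range m) : Set ℕ).PairwiseDisjoint (fun k =>
      ((motzkinSet k) ×ˢ (motzkinSet (m-1-k))).image (fun p => glue p.1 p.2)) := by
    intro k _ k' _ hne
    rw [Function.onFun, Finset.disjoint_left]
    rintro P hP hP'
    simp only [Finset.mem_image, Finset.mem_product, mem_motzkinSet] at hP hP'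
    obtain ⟨p, ⟨⟨hpl, hp1⟩, _⟩, rfl⟩ := hP
    obtain ⟨p', ⟨⟨hpl', hp1'⟩, _⟩, he⟩ := hP'
    obtain ⟨e1, _⟩ := glue_inj hp1' hp1 he
    exact hne (by rw [← hpl, ← hpl', e1])
  rw [Apoly_eq, hset, Finset.sum_union hdisj, Finset.sum_biUnion hpair]
  congr 1
  · rw [Finset.sum_image (by intros a _ b _ h; exact List.tail_eq_of_cons_eq h)]
    rw [Apoly_eq]
    exact Finset.sum_congr rfl fun P _ => by rw [wexp_cons_H]
  · apply Finset.sum_congr rfl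
    intro k hk
    rw [Finset.sum_image]
    · have : ∀ p ∈ (motzkinSet k) ×ˢ (motzkinSet (m-1-k)),
          (X : Polynomial ℤ) ^ wexp (glue p.1 p.2)
            = (X ^ k * X ^ wexp p.1) * X ^ wexp p.2 := by
        rintro ⟨P1, P2⟩ hp
        simp only [Finset.mem_product, mem_motzkinSet] at hp
        rw [wexp_glue P2 hp.1.2, hp.1.1]
        rw [pow_add, pow_add, mul_assoc]
      rw [Finset.sum_congr rfl this, Finset.sum_product, Apoly_eq, Apoly_eq,
        mul_assoc, Finset.sum_mul_sum, Finset.mul_sum]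
      apply Finset.sum_congr rfl
      intro P1 _
      rw [Finset.mul_sum]
      apply Finset.sum_congr rfl
      intro P2 _
      dsimp only
      ring
    · rintro ⟨a1, a2⟩ ha ⟨b1, b2⟩ hb he
      simp only [Finset.mem_coe, Finset.mem_product, mem_motzkinSet] at ha hb
      dsimp only at he
      obtain ⟨e1, e2⟩ := glue_inj ha.1.2 hb.1.2 he
      rw [e1, e2]

/-- The polynomials `A n = ∑_{P ∈ M_n} q^{2·sh_u P + sh_h P}` satisfy `A 0 = 1` and
`A n = A (n-1) + ∑_{k=0}^{n-2} q^k A k A (n-2-k)` for `n ≥ 1`; hence `A n` equals the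
q-Motzkin polynomial `Mq n`. -/
theorem Apoly_eq_qMotzkin (Mq : ℕ → Polynomial ℤ) (hq0 : Mq 0 = 1)
    (hqrec : ∀ n, 1 ≤ n →
      Mq n = Mq (n - 1) +
        ∑ k ∈ Finset.range (n - 1), X ^ k * Mq k * Mq (n - 2 - k)) :
    Apoly 0 = 1 ∧
      (∀ n, 1 ≤ n →
        Apoly n = Apoly (n - 1) +
          ∑ k ∈ Finset.range (n - 1), X ^ k * Apoly k * Apoly (n - 2 - k)) ∧
      ∀ n, Apoly n = Mq n := by
  have hrec : ∀ n, 1 ≤ n →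
      Apoly n = Apoly (n - 1) +
        ∑ k ∈ Finset.range (n - 1), X ^ k * Apoly k * Apoly (n - 2 - k) := by
    intro n hn
    obtain ⟨m, rfl⟩ : ∃ m, n = m + 1 := ⟨n - 1, by omega⟩
    simpa using Apoly_rec m
  refine ⟨Apoly_zero, hrec, ?_⟩
  intro n
  induction n using Nat.strong_induction_on with
  | _ n ih =>
    rcases Nat.eq_zero_or_pos n with rfl | hn
    · rw [Apoly_zero, hq0]
    · rw [hrec n hn, hqrec n hn, ih (n-1) (by omega)]
      rw [add_right_inj]
      apply Finset.sum_congr rfl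
      intro k hk
      rw [Finset.mem_range] at hk
      rw [ih k (by omega), ih (n-2-k) (by omega)]
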